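/- Let D ≥ 2 be an integer and let (b_n)_{n≥0} be a strictly increasing sequence of real numbers that is bounded above, such that D·b_n − b_{n−1} ∈ ℤ for every n ≥ 1. Then the limit a := lim_{n→∞} b_n exists and satisfies (D−1)·a ∈ ℤ; that is, a is a fixed point of the map θ ↦ Dθ (mod ℤ) on ℝ/ℤ. -/

import Mathlib

open Filter Topology

/-- A bounded strictly increasing sequence `(b_n)` with
`D·b_n − b_{n−1} ∈ ℤ` for all `n ≥ 1` converges to a limit `a` with `(D−1)·a ∈ ℤ`,
i.e. `a` represents a fixed point of `θ ↦ Dθ (mod ℤ)`. -/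
theorem limit_is_fixed_angle (D : ℕ) (hD : 2 ≤ D) (b : ℕ → ℝ)
    (hmono : StrictMono b) (hbdd : BddAbove (Set.range b))
    (hint : ∀ n : ℕ, ∃ k : ℤ, (D : ℝ) * b (n + 1) - b n = k) :
    ∃ a : ℝ, Tendsto b atTop (𝓝 a) ∧ ∃ m : ℤ, ((D : ℝ) - 1) * a = m := by
  obtain ⟨a, ha⟩ : ∃ a, Tendsto b atTop (𝓝 a) :=
    ⟨_, tendsto_atTop_ciSup hmono.monotone hbdd⟩
  refine ⟨a, ha, ?_⟩
  choose k hk using hint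
  have h1 : Tendsto (fun n => ((k n : ℝ))) atTop (𝓝 ((D : ℝ) * a - a)) := by
    simp_rw [← hk]
    exact (tendsto_const_nhds.mul (ha.comp (tendsto_add_atTop_nat 1))).sub ha
  have hclosed : IsClosed (Set.range ((↑·) : ℤ → ℝ)) :=
    Int.isClosedEmbedding_coe_real.isClosed_range
  obtain ⟨m, hm⟩ : (D : ℝ) * a - a ∈ Set.range ((↑·) : ℤ → ℝ) :=
    hclosed.mem_of_tendsto h1 (Eventually.of_forall fun n => ⟨k n, rfl⟩)
  exact ⟨m, by linarith⟩
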